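/- Let λ, μ ∈ ℝ satisfy the strong convexity condition μ > 0 and 3λ + 2μ > 0. Let P : ℝ³ → ℝ be a harmonic homogeneous polynomial of degree n ≥ 0, set a = (2nλ + 2(3n+1)μ) / ((n+3)λ + (n+5)μ), and define 𝒩(x) = a P(x) x + (1 − a/(2n+1) − |x|²) ∇P(x). Then a > 0 or (n, P) trivial, and for every x with |x| = 1, the traction of 𝒩 satisfies λ(∇·𝒩)(x) x + μ(∇𝒩(x) + ∇𝒩(x)ᵗ) x = μ (2(2n+1)/a − 3) 𝒩(x), provided a ≠ 0. -/

import Mathlib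

open MeasureTheory Real Matrix
open scoped RealInnerProductSpace

noncomputable section

/-- Three-dimensional Euclidean space. -/
abbrev E3 : Type := EuclideanSpace ℝ (Fin 3)

/-- Build an element of `E3` from coordinates. -/
def toE3 (v : Fin 3 → ℝ) : E3 := (WithLp.equiv 2 (Fin 3 → ℝ)).symm v

/-- Partial derivative in the `i`-th coordinate direction. -/
def pd (f : E3 → ℝ) (i : Fin 3) (x : E3) : ℝ :=
  fderiv ℝ f x (EuclideanSpace.single i 1)

/-- The gradient, as the vector of partial derivatives. -/
def grad3 (f : E3 → ℝ) (x : E3) : E3 := toE3 fun i => pd f i x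

/-- The Laplacian: the sum of the second partial derivatives. -/
def lap3 (f : E3 → ℝ) (x : E3) : ℝ := ∑ i, pd (pd f i) i x

/-- Divergence of a vector field. -/
def div3 (u : E3 → E3) (x : E3) : ℝ := ∑ i, pd (fun y => u y i) i x

/-- Componentwise Laplacian of a vector field. -/
def vlap3 (u : E3 → E3) (x : E3) : E3 := toE3 fun i => lap3 (fun y => u y i) x

/-- Cross product in `ℝ³`. -/
def cross3 (u v : E3) : E3 :=
  toE3 ![u 1 * v 2 - u 2 * v 1, u 2 * v 0 - u 0 * v 2, u 0 * v 1 - u 1 * v 0]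

/-- The function `ℝ³ → ℝ` determined by a polynomial in three variables. -/
def polyFun (P : MvPolynomial (Fin 3) ℝ) : E3 → ℝ :=
  fun x => MvPolynomial.eval (fun i => x i) P

/-- The Jacobian matrix `(∇u)_{ij} = ∂u_i/∂x_j` of a vector field. -/
def jac3 (u : E3 → E3) (x : E3) : Matrix (Fin 3) (Fin 3) ℝ :=
  Matrix.of fun i j => fderiv ℝ (fun y => u y i) x (EuclideanSpace.single j 1)


open MvPolynomial

lemma toE3_apply (v : Fin 3 → ℝ) (i : Fin 3) : toE3 v i = v i := rfl

lemma polyFun_hasFDerivAt (P : MvPolynomial (Fin 3) ℝ) (x : E3) :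
    HasFDerivAt (polyFun P)
      (∑ j, polyFun (pderiv j P) x • (EuclideanSpace.proj j : E3 →L[ℝ] ℝ)) x := by
  induction P using MvPolynomial.induction_on with
  | C a =>
      have h0 : HasFDerivAt (fun _ : E3 => a) (0 : E3 →L[ℝ] ℝ) x := hasFDerivAt_const a x
      convert h0 using 1
      · funext y; simp [polyFun]
      · simp [pderiv_C, polyFun]
  | add p q hp hq =>
      have : HasFDerivAt (polyFun p + polyFun q) (_ : E3 →L[ℝ] ℝ) x := hp.add hq
      convert this using 1
      · funext y; simp [polyFun]
      · ext v
        simp [polyFun, Finset.sum_add_distrib, add_mul, mul_add]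
  | mul_X p i hp =>
      have hco := (EuclideanSpace.proj (𝕜 := ℝ) (ι := Fin 3) i).hasFDerivAt (x := x)
      have : HasFDerivAt (polyFun p * ⇑(EuclideanSpace.proj (𝕜 := ℝ) (ι := Fin 3) i)) (_ : E3 →L[ℝ] ℝ) x := hp.mul hco
      convert this using 1
      · funext y; simp [polyFun]
      · ext v
        simp [polyFun, pderiv_mul, Pi.single_apply, apply_ite, add_mul, mul_comm, mul_left_comm,
          Finset.sum_add_distrib, Finset.mul_sum, Finset.sum_ite_eq']
        rw [Finset.sum_congr rfl (fun j (_ : j ∈ Finset.univ) => mul_add (v j) _ _),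
          Finset.sum_add_distrib]
        congr 1
        · simp [mul_ite, Finset.sum_ite_eq, eq_comm (a := i)]
        · exact Finset.sum_congr rfl fun j _ => by ring

lemma pd_polyFun (P : MvPolynomial (Fin 3) ℝ) (i : Fin 3) (x : E3) :
    pd (polyFun P) i x = polyFun (pderiv i P) x := by
  rw [pd, (polyFun_hasFDerivAt P x).fderiv]
  simp [EuclideanSpace.single_apply, Finset.sum_ite_eq']

lemma eval_smul_of_isHomogeneous {P : MvPolynomial (Fin 3) ℝ} {n : ℕ}
    (h : P.IsHomogeneous n) (t : ℝ) (x : E3) :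
    polyFun P (t • x) = t ^ n * polyFun P x := by
  classical
  simp only [polyFun]
  rw [eval_eq, eval_eq, Finset.mul_sum]
  refine Finset.sum_congr rfl fun d hd => ?_
  have hdeg : d.degree = n := by
    by_contra hne
    exact (mem_support_iff.mp hd) (h.coeff_eq_zero hne)
  have : ∀ k : Fin 3, (t • x) k = t * x k := fun k => rfl
  simp only [this, mul_pow, Finset.prod_mul_distrib, Finset.prod_pow_eq_pow_sum]
  rw [show ∑ i ∈ d.support, d i = n from hdeg]
  ring

lemma euler_identity {P : MvPolynomial (Fin 3) ℝ} {n : ℕ}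
    (h : P.IsHomogeneous n) (x : E3) :
    ∑ i, x i * polyFun (pderiv i P) x = n * polyFun P x := by
  have hs : HasDerivAt (fun t : ℝ => t • x) x 1 := by
    simpa using (hasDerivAt_id (1 : ℝ)).smul_const x
  have h1 : HasDerivAt (fun t : ℝ => polyFun P (t • x))
      (∑ i, polyFun (pderiv i P) x * x i) 1 := by
    have := (polyFun_hasFDerivAt P ((1 : ℝ) • x)).comp_hasDerivAt 1 hs
    simp [one_smul, ContinuousLinearMap.sum_apply] at this
    exact this
  have h2 : HasDerivAt (fun t : ℝ => polyFun P (t • x)) ((n : ℝ) * polyFun P x) 1 := by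
    have heq : (fun t : ℝ => polyFun P (t • x)) = fun t => t ^ n * polyFun P x :=
      funext fun t => by exact eval_smul_of_isHomogeneous h t x
    rw [heq]
    simpa using (hasDerivAt_pow n (1 : ℝ)).mul_const (polyFun P x)
  have := h1.unique h2
  rw [← this]
  exact Finset.sum_congr rfl fun i _ => mul_comm _ _

lemma isHomogeneous_pderiv {P : MvPolynomial (Fin 3) ℝ} {n : ℕ}
    (h : P.IsHomogeneous (n + 1)) (i : Fin 3) : (pderiv i P).IsHomogeneous n := by
  classical
  rw [show pderiv i P = ∑ d ∈ P.support, pderiv i (monomial d (coeff d P)) by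
    rw [← map_sum, ← P.as_sum]]
  refine IsHomogeneous.sum _ _ _ fun d hd => ?_
  rw [pderiv_monomial]
  rcases Nat.eq_zero_or_pos (d i) with h0 | h0
  · rw [h0]; simp only [Nat.cast_zero, mul_zero, map_zero]
    exact isHomogeneous_zero _ _ _
  · apply isHomogeneous_monomial
    have hdeg : d.degree = n + 1 := by
      by_contra hne
      exact (mem_support_iff.mp hd) (h.coeff_eq_zero hne)
    have hle : Finsupp.single i 1 ≤ d := by rwa [Finsupp.single_le_iff]
    have hadd : (d - Finsupp.single i 1) + Finsupp.single i 1 = d := tsub_add_cancel_of_le hle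
    have hdegadd : ((d - Finsupp.single i 1) + Finsupp.single i 1).degree
        = (d - Finsupp.single i 1).degree + (Finsupp.single i 1).degree := by
      simp [Finsupp.degree_eq_weight_one, map_add]
    have hsing : (Finsupp.single i (1 : ℕ)).degree = 1 := by
      simp [Finsupp.degree_single]
    rw [hadd, hdeg, hsing] at hdegadd
    omega

lemma pderiv_comm' (i j : Fin 3) (P : MvPolynomial (Fin 3) ℝ) :
    pderiv i (pderiv j P) = pderiv j (pderiv i P) := by
  classical
  induction P using MvPolynomial.induction_on with
  | C a => simp [pderiv_C]
  | add p q hp hq => simp [map_add, hp, hq]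
  | mul_X p k hp =>
      simp only [pderiv_mul, map_add, pderiv_mul, hp]
      rcases eq_or_ne k i with rfl | hki <;> rcases eq_or_ne k j with rfl | hkj <;>
        simp_all [pderiv_X_self, pderiv_X_of_ne, pderiv_one] <;> try ring

lemma normsq_eq (y : E3) : ‖y‖ ^ 2 = ∑ k, y k ^ 2 := by
  rw [EuclideanSpace.norm_eq, Real.sq_sqrt (by positivity)]
  exact Finset.sum_congr rfl fun k _ => by rw [Real.norm_eq_abs, sq_abs]

lemma pderiv_eq_zero_of_isHomogeneous_zero {P : MvPolynomial (Fin 3) ℝ}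
    (h : P.IsHomogeneous 0) (i : Fin 3) : pderiv i P = 0 := by
  classical
  rw [show pderiv i P = ∑ d ∈ P.support, pderiv i (monomial d (coeff d P)) by
    rw [← map_sum, ← P.as_sum]]
  refine Finset.sum_eq_zero fun d hd => ?_
  have hdeg : d.degree = 0 := by
    by_contra hne
    exact (mem_support_iff.mp hd) (h.coeff_eq_zero hne)
  have hd0 : d = 0 := by rwa [Finsupp.degree_eq_zero_iff] at hdeg
  subst hd0
  simp [pderiv_monomial]

lemma euler_shift {P : MvPolynomial (Fin 3) ℝ} {n : ℕ} (h : P.IsHomogeneous n)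
    (i : Fin 3) (x : E3) :
    ∑ j, x j * polyFun (pderiv j (pderiv i P)) x = ((n : ℝ) - 1) * polyFun (pderiv i P) x := by
  cases n with
  | zero => simp [pderiv_eq_zero_of_isHomogeneous_zero h i, polyFun]
  | succ m =>
      have := euler_identity (isHomogeneous_pderiv h i) x
      rw [this]
      push_cast
      ring

set_option maxHeartbeats 1000000 in
/-- under strong convexity, with
`a = (2nλ + 2(3n+1)μ)/((n+3)λ + (n+5)μ)` and
`𝒩(x) = a P(x) x + (1 − a/(2n+1) − |x|²) ∇P(x)` for a harmonic homogeneous polynomial `P`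
of degree `n`, one has `a > 0`, and (provided `a ≠ 0`) on the unit sphere the traction of `𝒩`
satisfies `λ(∇·𝒩)(x) x + μ(∇𝒩(x) + ∇𝒩(x)ᵗ) x = μ (2(2n+1)/a − 3) 𝒩(x)`. -/
theorem traction_of_N_field (lam mu : ℝ) (hmu : 0 < mu) (hconv : 0 < 3 * lam + 2 * mu)
    (n : ℕ) (P : MvPolynomial (Fin 3) ℝ)
    (hhom : P.IsHomogeneous n)
    (hharm : ∀ x, lap3 (polyFun P) x = 0) :
    let a : ℝ := (2 * (n : ℝ) * lam + 2 * (3 * (n : ℝ) + 1) * mu) /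
      (((n : ℝ) + 3) * lam + ((n : ℝ) + 5) * mu)
    let N : E3 → E3 := fun y => (a * polyFun P y) • y +
      (1 - a / (2 * (n : ℝ) + 1) - ‖y‖ ^ 2) • grad3 (polyFun P) y
    0 < a ∧
    (a ≠ 0 → ∀ x : E3, ‖x‖ = 1 →
      (lam * div3 N x) • x + mu • toE3 ((jac3 N x + (jac3 N x)ᵀ).mulVec fun i => x i)
        = (mu * (2 * (2 * (n : ℝ) + 1) / a - 3)) • N x) := by
  intro a N
  have hadef : a = (2 * (n : ℝ) * lam + 2 * (3 * (n : ℝ) + 1) * mu) /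
      (((n : ℝ) + 3) * lam + ((n : ℝ) + 5) * mu) := rfl
  have hn0 : (0 : ℝ) ≤ (n : ℝ) := Nat.cast_nonneg n
  have hden : (0 : ℝ) < ((n : ℝ) + 3) * lam + ((n : ℝ) + 5) * mu := by
    nlinarith [mul_nonneg hn0 hconv.le]
  have hnum : (0 : ℝ) < 2 * (n : ℝ) * lam + 2 * (3 * (n : ℝ) + 1) * mu := by
    nlinarith [mul_nonneg hn0 hconv.le]
  have hapos : 0 < a := hadef ▸ div_pos hnum hden
  refine ⟨hapos, fun ha x hx => ?_⟩
  set c : ℝ := 1 - a / (2 * (n : ℝ) + 1) with hc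
  have hNdef : N = fun y => (a * polyFun P y) • y +
      (c - ‖y‖ ^ 2) • grad3 (polyFun P) y := rfl
  clear_value a N c
  have h2n1 : (2 * (n : ℝ) + 1) ≠ 0 := by positivity
  have hr2 : ∑ k, x k ^ 2 = 1 := by rw [← normsq_eq, hx, one_pow]
  have hE1 : ∑ i, x i * polyFun (pderiv i P) x = (n : ℝ) * polyFun P x :=
    euler_identity hhom x
  have hE2 : ∀ i, ∑ j, x j * polyFun (pderiv j (pderiv i P)) x
      = ((n : ℝ) - 1) * polyFun (pderiv i P) x := fun i => euler_shift hhom i x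
  have hE3 : ∑ i, polyFun (pderiv i (pderiv i P)) x = 0 := by
    have h0 := hharm x
    have hpd : ∀ i : Fin 3, pd (polyFun P) i = polyFun (pderiv i P) :=
      fun i => funext fun y => pd_polyFun P i y
    simp only [lap3, hpd, pd_polyFun] at h0
    exact h0
  set Q : Fin 3 → MvPolynomial (Fin 3) ℝ :=
    fun i => C a * P * X i + (C c - (X 0 ^ 2 + X 1 ^ 2 + X 2 ^ 2)) * pderiv i P with hQ
  have hNcomp : ∀ (y : E3) (i : Fin 3), N y i = polyFun (Q i) y := by
    intro y i
    have h1 : N y i = a * polyFun P y * y i + (c - ‖y‖ ^ 2) * polyFun (pderiv i P) y := by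
      rw [hNdef]
      show (a * polyFun P y) * y i
          + (c - ‖y‖ ^ 2) * (grad3 (polyFun P) y i) = _
      rw [grad3, toE3_apply, pd_polyFun]
    rw [h1, normsq_eq]
    simp only [hQ, polyFun, _root_.map_add, _root_.map_mul, _root_.map_sub, _root_.map_pow, eval_C, eval_X,
      Fin.sum_univ_three]
    try ring
  have hjac : ∀ i j, jac3 N x i j = polyFun (pderiv j (Q i)) x := by
    intro i j
    have hfQ : (fun y => N y i) = polyFun (Q i) := funext fun y => hNcomp y i
    show fderiv ℝ (fun y => N y i) x (EuclideanSpace.single j 1) = _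
    rw [hfQ]
    exact pd_polyFun (Q i) j x
  have hentry : ∀ i j, polyFun (pderiv j (Q i)) x
      = a * (x i * polyFun (pderiv j P) x) + (if i = j then a * polyFun P x else 0)
        - 2 * (x j * polyFun (pderiv i P) x)
        + (c - 1) * polyFun (pderiv j (pderiv i P)) x := by
    intro i j
    have key : polyFun (pderiv j (Q i)) x
        = a * (x i * polyFun (pderiv j P) x) + (if i = j then a * polyFun P x else 0)
          - 2 * (x j * polyFun (pderiv i P) x)
          + (c - ∑ k, x k ^ 2) * polyFun (pderiv j (pderiv i P)) x := by
      fin_cases i <;> fin_cases j <;>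
        · simp [hQ, polyFun, pderiv_mul, pderiv_C_mul, pderiv_pow, pderiv_X_self,
            pderiv_X_of_ne, Fin.sum_univ_three, _root_.map_add, _root_.map_mul, _root_.map_sub, _root_.map_pow]
          ring
    rw [key, hr2]
  have hgrow1 : ∀ i, ∑ j, jac3 N x i j * x j
      = a * ((n : ℝ) * polyFun P x) * x i + a * polyFun P x * x i
        - 2 * polyFun (pderiv i P) x
        + (c - 1) * (((n : ℝ) - 1) * polyFun (pderiv i P) x) := by
    intro i
    calc ∑ j, jac3 N x i j * x j
        = ∑ j, (a * x i * (x j * polyFun (pderiv j P) x)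
            + ((if i = j then a * polyFun P x else 0) * x j
            + (-(2 * polyFun (pderiv i P) x) * x j ^ 2
            + (c - 1) * (x j * polyFun (pderiv j (pderiv i P)) x)))) :=
          Finset.sum_congr rfl fun j _ => by rw [hjac, hentry]; ring
      _ = a * x i * (∑ j, x j * polyFun (pderiv j P) x)
            + ((a * polyFun P x) * x i
            + (-(2 * polyFun (pderiv i P) x) * (∑ j, x j ^ 2)
            + (c - 1) * (∑ j, x j * polyFun (pderiv j (pderiv i P)) x))) := by
          rw [Finset.sum_add_distrib, Finset.sum_add_distrib, Finset.sum_add_distrib,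
            ← Finset.mul_sum, ← Finset.mul_sum, ← Finset.mul_sum]
          simp [ite_mul, Finset.sum_ite_eq]
          try ring
      _ = _ := by rw [hE1, hE2 i, hr2]; ring
  have hgrow2 : ∀ i, ∑ j, jac3 N x j i * x j
      = a * polyFun (pderiv i P) x + a * polyFun P x * x i
        - 2 * ((n : ℝ) * polyFun P x) * x i
        + (c - 1) * (((n : ℝ) - 1) * polyFun (pderiv i P) x) := by
    intro i
    calc ∑ j, jac3 N x j i * x j
        = ∑ j, (a * polyFun (pderiv i P) x * x j ^ 2
            + ((if i = j then a * polyFun P x else 0) * x j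
            + (-(2 * x i) * (x j * polyFun (pderiv j P) x)
            + (c - 1) * (x j * polyFun (pderiv j (pderiv i P)) x)))) :=
          Finset.sum_congr rfl fun j _ => by
            rw [hjac, hentry, pderiv_comm' i j]
            simp only [eq_comm (a := j) (b := i)]
            ring
      _ = a * polyFun (pderiv i P) x * (∑ j, x j ^ 2)
            + ((a * polyFun P x) * x i
            + (-(2 * x i) * (∑ j, x j * polyFun (pderiv j P) x)
            + (c - 1) * (∑ j, x j * polyFun (pderiv j (pderiv i P)) x))) := by
          rw [Finset.sum_add_distrib, Finset.sum_add_distrib, Finset.sum_add_distrib,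
            ← Finset.mul_sum, ← Finset.mul_sum, ← Finset.mul_sum]
          simp [ite_mul, Finset.sum_ite_eq]
          try ring
      _ = _ := by rw [hE1, hE2 i, hr2]; ring
  have hdiv : div3 N x = ((n : ℝ) * a + 3 * a - 2 * (n : ℝ)) * polyFun P x := by
    have h0 : div3 N x = ∑ i, jac3 N x i i := rfl
    rw [h0]
    calc ∑ i, jac3 N x i i
        = ∑ i, (a * (x i * polyFun (pderiv i P) x) + (a * polyFun P x
            + (-2 * (x i * polyFun (pderiv i P) x)
            + (c - 1) * polyFun (pderiv i (pderiv i P)) x))) :=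
          Finset.sum_congr rfl fun i _ => by rw [hjac, hentry, if_pos rfl]; ring
      _ = a * (∑ i, x i * polyFun (pderiv i P) x) + (3 * (a * polyFun P x)
            + (-2 * (∑ i, x i * polyFun (pderiv i P) x)
            + (c - 1) * (∑ i, polyFun (pderiv i (pderiv i P)) x))) := by
          rw [Finset.sum_add_distrib, Finset.sum_add_distrib, Finset.sum_add_distrib,
            ← Finset.mul_sum, ← Finset.mul_sum, ← Finset.mul_sum]
          simp [Fin.sum_univ_three]
          try ring
      _ = _ := by rw [hE1, hE3]; ring
  have hNx : ∀ i, N x i = a * polyFun P x * x i + (c - 1) * polyFun (pderiv i P) x := by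
    intro i
    have h1 : N x i = a * polyFun P x * x i + (c - ‖x‖ ^ 2) * polyFun (pderiv i P) x := by
      rw [hNdef]
      show (a * polyFun P x) * x i
          + (c - ‖x‖ ^ 2) * (grad3 (polyFun P) x i) = _
      rw [grad3, toE3_apply, pd_polyFun]
    rw [h1, hx, one_pow]
  ext i
  show lam * div3 N x * x i + mu * (∑ j, (jac3 N x i j + jac3 N x j i) * x j)
      = mu * (2 * (2 * (n : ℝ) + 1) / a - 3) * (N x i)
  have hsplit : ∑ j, (jac3 N x i j + jac3 N x j i) * x j
      = (∑ j, jac3 N x i j * x j) + ∑ j, jac3 N x j i * x j := by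
    rw [← Finset.sum_add_distrib]
    exact Finset.sum_congr rfl fun j _ => by ring
  rw [hsplit, hgrow1 i, hgrow2 i, hdiv, hNx i, hc, hadef]
  have hden' : lam * ((n : ℝ) + 3) + mu * ((n : ℝ) + 5) ≠ 0 := by nlinarith
  have hnum' : lam * (n : ℝ) + ((n : ℝ) * 3 + 1) * mu ≠ 0 := by nlinarith
  field_simp
  ring

end
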